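/- arXiv:2503.10254 — 2 statements merged into one kernel-verified Lean document; each statement's English description precedes it below -/
import Mathlib

section
/- Exact suffix retrieval by querying: if v_0, …, v_{n-1} are bipolar hypervectors in {-1,1}^D with n ≥ 1, and the query vector is q = P_k(Encode(v_0, …, v_{n-2})) (the shifted encoding of the length-(n-1) prefix), then binding the full encoding with the query recovers the last state exactly: Encode(v_0, …, v_{n-1}) ⊗ q = v_{n-1}. -/
/-- A hypervector `v : Fin D → ℝ` is bipolar if every coordinate is `1` or `-1`. -/
def Bipolar {D : ℕ} (v : Fin D → ℝ) : Prop := ∀ i, v i = 1 ∨ v i = -1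

/-- The binding operator: coordinatewise multiplication. -/
def bind {D : ℕ} (u v : Fin D → ℝ) : Fin D → ℝ := fun i => u i * v i

/-- The cyclic shift operator. -/
def shift {D : ℕ} (k : Fin D) (v : Fin D → ℝ) : Fin D → ℝ := fun i => v (i + k)

/-- `Encode(v_0, …, v_{n-1}) = ⊗_{j=0}^{n-1} P_k^{n-1-j}(v_j)`; the encoding of the
empty sequence is the all-ones vector. -/
def Encode {D : ℕ} (k : Fin D) {n : ℕ} (V : Fin n → (Fin D → ℝ)) : Fin D → ℝ :=
  fun i => ∏ j : Fin n, (shift k)^[n - 1 - (j : ℕ)] (V j) i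

lemma iterate_shift_bipolar {D : ℕ} (k : Fin D) (m : ℕ) (v : Fin D → ℝ) (h : Bipolar v) :
    Bipolar ((shift k)^[m] v) := by
  induction m with
  | zero => exact h
  | succ m ih =>
    rw [Function.iterate_succ_apply']
    exact fun i => ih (i + k)

lemma iterate_shift_apply {D : ℕ} (k : Fin D) (m : ℕ) (v : Fin D → ℝ) (i : Fin D) :
    (shift k)^[m] v (i + k) = (shift k)^[m + 1] v i := by
  induction m generalizing v with
  | zero => rfl
  | succ m ih =>
    rw [Function.iterate_succ_apply, Function.iterate_succ_apply]
    exact ih (shift k v)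

/-- Exact suffix retrieval: binding the encoding of a sequence of length `n + 1 ≥ 1` of
bipolar hypervectors with the query `q = P_k(Encode(prefix))` recovers the last state. -/
theorem encode_query_recovers_last {D : ℕ} (hD : 0 < D) (k : Fin D) (n : ℕ)
    (V : Fin (n + 1) → (Fin D → ℝ)) (hV : ∀ j, Bipolar (V j)) :
    bind (Encode k V) (shift k (Encode k (fun j : Fin n => V j.castSucc))) = V (Fin.last n) := by
  funext i
  unfold _root_.bind shift Encode
  have h2 : ∀ j : Fin n, (shift k)^[n - 1 - (j : ℕ)] (V j.castSucc) (i + k)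
      = (shift k)^[n - (j : ℕ)] (V j.castSucc) i := by
    intro j
    rw [iterate_shift_apply]
    have hj := j.isLt
    have : n - 1 - (j : ℕ) + 1 = n - (j : ℕ) := by omega
    rw [this]
  rw [Finset.prod_congr rfl (fun j _ => h2 j), Fin.prod_univ_castSucc]
  have h1 : ∀ j : Fin n,
      (shift k)^[n + 1 - 1 - ((j.castSucc : Fin (n+1)) : ℕ)] (V j.castSucc) i
      = (shift k)^[n - (j : ℕ)] (V j.castSucc) i := by
    intro j
    have : n + 1 - 1 - ((j.castSucc : Fin (n+1)) : ℕ) = n - (j : ℕ) := by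
      simp
    rw [this]
  rw [Finset.prod_congr rfl (fun j _ => h1 j)]
  simp only [Fin.val_last, Nat.add_sub_cancel, Nat.sub_self, Function.iterate_zero, id_eq]
  set A := ∏ j : Fin n, (shift k)^[n - (j : ℕ)] (V j.castSucc) i with hA
  have hAA : A * A = 1 := by
    rw [hA, ← Finset.prod_mul_distrib]
    apply Finset.prod_eq_one
    intro j _
    rcases iterate_shift_bipolar k (n - (j : ℕ)) _ (hV j.castSucc) i with h | h <;>
      rw [h] <;> norm_num
  calc A * V (Fin.last n) i * A = (A * A) * V (Fin.last n) i := by ring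
    _ = V (Fin.last n) i := by rw [hAA]; ring
end

section
/- Constant-time sliding-window update identity (core of the paper's Theorem on amortized constant-time n-gram construction): let s_0, s_1, …, s_{m-1} be a session of bipolar hypervectors in {-1,1}^D, let n ≥ 1, and for each valid index i let G_i = Encode(s_i, s_{i+1}, …, s_{i+n-1}) denote the encoding of the n-gram starting at index i. Then for every i with i + n ≤ m - 1, the next n-gram encoding is obtained from the previous one by one unbinding, one shift, and one binding: G_{i+1} = P_k(G_i ⊗ P_k^{n-1}(s_i)) ⊗ s_{i+n}. -/
/-- The encoding of the `n`-gram of the session `s` starting at index `i`. -/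
def Gram {D : ℕ} (k : Fin D) (n : ℕ) (s : ℕ → (Fin D → ℝ)) (i : ℕ) : Fin D → ℝ :=
  Encode k (fun j : Fin n => s (i + (j : ℕ)))

lemma shift_iterate {D : ℕ} [NeZero D] (k : Fin D) (r : ℕ) (v : Fin D → ℝ) (x : Fin D) :
    (shift k)^[r] v x = v (x + r • k) := by
  induction r generalizing x with
  | zero => simp
  | succ r ih =>
    simp only [Function.iterate_succ_apply', shift, ih, succ_nsmul]
    congr 1; abel

/-- Constant-time sliding-window update: for a session `s_0, …, s_{m-1}` of bipolar
hypervectors and `n ≥ 1`, the encoding `G_{i+1}` of the next `n`-gram is obtained from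
`G_i` by one unbinding, one shift, and one binding:
`G_{i+1} = P_k(G_i ⊗ P_k^{n-1}(s_i)) ⊗ s_{i+n}` whenever `i + n ≤ m - 1`. -/
theorem gram_sliding_update {D : ℕ} (hD : 0 < D) (k : Fin D) (m n : ℕ) (hn : 1 ≤ n)
    (s : ℕ → (Fin D → ℝ)) (hs : ∀ j < m, Bipolar (s j))
    (i : ℕ) (hi : i + n ≤ m - 1) :
    Gram k n s (i + 1) =
      bind (shift k (bind (Gram k n s i) ((shift k)^[n - 1] (s i)))) (s (i + n)) := by
  haveI : NeZero D := ⟨hD.ne'⟩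
  obtain ⟨p, rfl⟩ : ∃ p, n = p + 1 := ⟨n - 1, by omega⟩
  have him : i < m := by omega
  funext x
  simp only [Gram, Encode, _root_.bind, shift, shift_iterate, Nat.add_sub_cancel]
  rw [Fin.prod_univ_castSucc, Fin.prod_univ_succ]
  have hcancel : s i (x + k + p • k) * s i (x + k + p • k) = 1 := by
    rcases hs i him (x + k + p • k) with h | h <;> rw [h] <;> ring
  have hprod : ∀ j : Fin p,
      s (i + 1 + ((Fin.castSucc j : Fin (p+1)) : ℕ)) (x + (p - ((Fin.castSucc j : Fin (p+1)) : ℕ)) • k) =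
      s (i + ((Fin.succ j : Fin (p+1)) : ℕ)) (x + k + (p - ((Fin.succ j : Fin (p+1)) : ℕ)) • k) := by
    intro j
    have hj : (j : ℕ) < p := j.isLt
    simp only [Fin.coe_castSucc, Fin.val_succ]
    have h1 : i + 1 + (j : ℕ) = i + ((j : ℕ) + 1) := by omega
    have h2 : p - (j : ℕ) = (p - ((j : ℕ) + 1)) + 1 := by omega
    rw [h1, h2, succ_nsmul]
    congr 1
    abel
  rw [Finset.prod_congr rfl (fun j _ => hprod j)]
  simp only [Fin.val_zero, Nat.sub_zero, Fin.val_last, Nat.sub_self, zero_smul, add_zero,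
    Nat.add_zero]
  have h3 : i + 1 + p = i + (p + 1) := by omega
  rw [h3]
  linear_combination
    (-((∏ j : Fin p, s (i + ((Fin.succ j : Fin (p+1)) : ℕ)) (x + k + (p - ((Fin.succ j : Fin (p+1)) : ℕ)) • k)) *
      s (i + (p + 1)) x)) * hcancel
end
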